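/- Let N and N′ be nonempty positively convex polygons (with vertices in ℝ_{≥0} × ℤ_{≥0}) and let δ₀ > 0. The following are equivalent: (1) ς_δ(N) = ς_δ(N′) for every δ with 0 < δ ≤ δ₀; (2) χ_{δ₀}(N) = χ_{δ₀}(N′) and λ_N(s) = λ_{N′}(s) for every s ≥ χ_{δ₀}(N). -/

import Mathlib

noncomputable section
open Classical

/-- Positive convex hull: convex hull plus the positive quadrant. -/
def posHullSet (S : Set (ℝ × ℝ)) : Set (ℝ × ℝ) :=
  {p | ∃ c ∈ convexHull ℝ S, ∃ d : ℝ × ℝ, 0 ≤ d.1 ∧ 0 ≤ d.2 ∧ p = c + d}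

/-- A positively convex polygon: generated by a cloud of points of `ℝ_{≥0} × ℤ_{≥0}`. -/
def PosConvex (N : Set (ℝ × ℝ)) : Prop :=
  ∃ C : Set (ℝ × ℝ), (∀ q ∈ C, 0 ≤ q.1 ∧ ∃ m : ℕ, q.2 = (m : ℝ)) ∧ N = posHullSet C

/-- Abscissa of the polygon at height `s` (`∞` if the row is empty). -/
def lamN (N : Set (ℝ × ℝ)) (s : ℤ) : EReal :=
  sInf {v : EReal | ∃ l : ℝ, (l, (s : ℝ)) ∈ N ∧ v = (l : EReal)}

/-- Sharpness of the polygon at height `s`: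
`α_N(s) = λ_N(s−1) + λ_N(s+1) − 2λ_N(s)`, with the conventions `α_N(s) = 0` when
`λ_N(s) = ∞` and `α_N(s) = ∞` when `λ_N(s) < ∞` and `λ_N(s−1) = ∞`. -/
def sharpN (N : Set (ℝ × ℝ)) (s : ℤ) : EReal :=
  if lamN N s = ⊤ then 0
  else if lamN N (s - 1) = ⊤ then ⊤
  else lamN N (s - 1) + lamN N (s + 1) - 2 * lamN N s

/-- `ς_δ(N) = inf{a + δ·b : (a,b) ∈ N}`. -/
def sigN (N : Set (ℝ × ℝ)) (δ : ℝ) : EReal :=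
  sInf {v : EReal | ∃ p ∈ N, v = ((p.1 + δ * p.2 : ℝ) : EReal)}

/-- `χ_δ(N)`: the ordinate of the highest vertex on the critical line of slope `−1/δ`. -/
def chiN (N : Set (ℝ × ℝ)) (δ : ℝ) : ℕ :=
  sSup {s : ℕ | lamN N (s : ℤ) + ((δ * s : ℝ) : EReal) = sigN N δ}

open Pointwise

section basic
variable {N : Set (ℝ × ℝ)} (hN : PosConvex N)

lemma mem_add_of_mem (hN : PosConvex N) {p d : ℝ × ℝ} (hp : p ∈ N) (h1 : 0 ≤ d.1)
    (h2 : 0 ≤ d.2) : p + d ∈ N := by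
  obtain ⟨C, hC, rfl⟩ := hN
  obtain ⟨c, hc, e, he1, he2, rfl⟩ := hp
  exact ⟨c, hc, e + d, by simpa using add_nonneg he1 h1, by simpa using add_nonneg he2 h2,
    by rw [add_assoc]⟩

lemma quadrant_convex : Convex ℝ {d : ℝ × ℝ | 0 ≤ d.1 ∧ 0 ≤ d.2} := by
  intro x hx y hy a b ha hb hab
  constructor
  · have : 0 ≤ a * x.1 + b * y.1 := by
      have := mul_nonneg ha hx.1; have := mul_nonneg hb hy.1; linarith
    simpa using this
  · have : 0 ≤ a * x.2 + b * y.2 := by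
      have := mul_nonneg ha hx.2; have := mul_nonneg hb hy.2; linarith
    simpa using this

lemma posConvex_convex (hN : PosConvex N) : Convex ℝ N := by
  obtain ⟨C, hC, rfl⟩ := hN
  have : posHullSet C = convexHull ℝ C + {d : ℝ × ℝ | 0 ≤ d.1 ∧ 0 ≤ d.2} := by
    ext p
    constructor
    · rintro ⟨c, hc, d, h1, h2, rfl⟩
      exact Set.add_mem_add hc ⟨h1, h2⟩
    · rintro ⟨c, hc, d, hd, rfl⟩
      exact ⟨c, hc, d, hd.1, hd.2, rfl⟩
  rw [this]
  exact (convex_convexHull ℝ C).add quadrant_convex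

lemma mem_nonneg (hN : PosConvex N) {p : ℝ × ℝ} (hp : p ∈ N) : 0 ≤ p.1 ∧ 0 ≤ p.2 := by
  obtain ⟨C, hC, rfl⟩ := hN
  obtain ⟨c, hc, d, h1, h2, rfl⟩ := hp
  have hsub : convexHull ℝ C ⊆ {d : ℝ × ℝ | 0 ≤ d.1 ∧ 0 ≤ d.2} := by
    apply convexHull_min _ quadrant_convex
    intro q hq
    obtain ⟨h1, m, hm⟩ := hC q hq
    exact ⟨h1, by rw [hm]; positivity⟩
  obtain ⟨hc1, hc2⟩ := hsub hc
  constructor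
  · simpa using add_nonneg hc1 h1
  · simpa using add_nonneg hc2 h2

end basic

section lam
variable {N : Set (ℝ × ℝ)}

lemma lamN_le (l : ℝ) (s : ℤ) (h : (l, (s : ℝ)) ∈ N) : lamN N s ≤ (l : EReal) :=
  sInf_le ⟨l, h, rfl⟩

lemma lamN_nonneg (hN : PosConvex N) (s : ℤ) : 0 ≤ lamN N s := by
  apply le_sInf
  rintro v ⟨l, hl, rfl⟩
  exact_mod_cast (mem_nonneg hN hl).1

lemma lamN_ne_bot (hN : PosConvex N) (s : ℤ) : lamN N s ≠ ⊥ :=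
  fun h => by simpa [h] using lamN_nonneg hN s

lemma lamN_exists_lt {s : ℤ} {x : EReal} (h : lamN N s < x) :
    ∃ l : ℝ, (l, (s : ℝ)) ∈ N ∧ (l : EReal) < x := by
  obtain ⟨v, hv, hvx⟩ := sInf_lt_iff.mp h
  obtain ⟨l, hl, rfl⟩ := hv
  exact ⟨l, hl, hvx⟩

lemma lamN_mono (hN : PosConvex N) (s : ℤ) : lamN N (s + 1) ≤ lamN N s := by
  apply le_sInf
  rintro v ⟨l, hl, rfl⟩
  have : (l, ((s + 1 : ℤ) : ℝ)) ∈ N := by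
    have := mem_add_of_mem hN hl (d := (0, 1)) (by norm_num) (by norm_num)
    push_cast
    simpa using this
  exact sInf_le ⟨l, this, rfl⟩

lemma lamN_mono' (hN : PosConvex N) {s t : ℤ} (h : s ≤ t) : lamN N t ≤ lamN N s := by
  refine Int.le_induction (motive := fun t _ => lamN N t ≤ lamN N s) ?_ ?_ t h
  · exact le_refl _
  · exact fun n hn ih => le_trans (lamN_mono hN n) ih

lemma lamN_coe (hN : PosConvex N) {s : ℤ} (h : lamN N s ≠ ⊤) :
    lamN N s = ((lamN N s).toReal : EReal) := (EReal.coe_toReal h (lamN_ne_bot hN s)).symm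

/-- convexity of the polygon translates to midpoint convexity of `lamN`. -/
lemma lamN_convex3 (hN : PosConvex N) (s : ℤ) :
    lamN N (s + 1) + lamN N (s + 1) ≤ lamN N s + lamN N (s + 2) := by
  rcases eq_or_ne (lamN N s) ⊤ with h0 | h0
  · rw [h0, EReal.top_add_of_ne_bot (lamN_ne_bot hN _)]; exact le_top
  rcases eq_or_ne (lamN N (s + 2)) ⊤ with h2 | h2
  · rw [h2, EReal.add_top_of_ne_bot (lamN_ne_bot hN _)]; exact le_top
  have h1 : lamN N (s + 1) ≠ ⊤ := fun h => h0 (top_le_iff.mp (h ▸ lamN_mono hN s))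
  set x := (lamN N s).toReal
  set z := (lamN N (s + 2)).toReal
  set y := (lamN N (s + 1)).toReal
  have hy : lamN N (s+1) = (y : EReal) := lamN_coe hN h1
  have hx : lamN N s = (x : EReal) := lamN_coe hN h0
  have hz : lamN N (s+2) = (z : EReal) := lamN_coe hN h2
  rw [hx, hy, hz, ← EReal.coe_add, ← EReal.coe_add, EReal.coe_le_coe_iff]
  by_contra hcon
  push_neg at hcon
  set ε := (y + y - (x + z)) / 3 with hε
  have hεpos : 0 < ε := by simp only [hε]; linarith
  obtain ⟨a, ha, hax⟩ := lamN_exists_lt (N := N) (s := s) (x := ((x + ε : ℝ) : EReal))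
    (by rw [hx]; exact_mod_cast by linarith [hεpos])
  obtain ⟨b, hb, hbz⟩ := lamN_exists_lt (N := N) (s := s + 2) (x := ((z + ε : ℝ) : EReal))
    (by rw [hz]; exact_mod_cast by linarith [hεpos])
  have hax' : a < x + ε := by exact_mod_cast hax
  have hbz' : b < z + ε := by exact_mod_cast hbz
  have hmid : (((a + b) / 2 : ℝ), ((s + 1 : ℤ) : ℝ)) ∈ N := by
    have := (posConvex_convex hN) ha hb (by norm_num : (0:ℝ) ≤ 1/2) (by norm_num : (0:ℝ) ≤ 1/2)
      (by norm_num)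
    have heq : ((1:ℝ)/2) • ((a, ((s:ℤ):ℝ)) : ℝ × ℝ) + ((1:ℝ)/2) • ((b, (((s+2):ℤ):ℝ)) : ℝ × ℝ)
        = (((a + b) / 2 : ℝ), ((s + 1 : ℤ) : ℝ)) := by
      simp [Prod.ext_iff, Prod.smul_def]
      constructor
      · ring
      · ring
    rwa [heq] at this
  have := lamN_le _ _ hmid
  rw [hy] at this
  have : y ≤ (a + b) / 2 := by exact_mod_cast this
  simp only [hε] at hεpos hax' hbz'
  linarith

end lam

section sig
variable {N : Set (ℝ × ℝ)} {δ : ℝ}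

lemma sigN_le_mem {p : ℝ × ℝ} (hp : p ∈ N) : sigN N δ ≤ ((p.1 + δ * p.2 : ℝ) : EReal) :=
  sInf_le ⟨p, hp, rfl⟩

lemma sigN_le_lam (hN : PosConvex N) (hδ : 0 ≤ δ) (s : ℕ) :
    sigN N δ ≤ lamN N s + ((δ * s : ℝ) : EReal) := by
  rcases eq_or_ne (lamN N s) ⊤ with h | h
  · rw [h, EReal.top_add_of_ne_bot (by exact_mod_cast EReal.coe_ne_bot _)]; exact le_top
  set ℓ := (lamN N s).toReal with hℓdef
  have hℓ : lamN N s = (ℓ : EReal) := lamN_coe hN h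
  rw [hℓ, ← EReal.coe_add]
  apply le_of_forall_gt_imp_ge_of_dense
  intro x hx
  rcases eq_or_ne x ⊤ with rfl | hxt
  · exact le_top
  have hxb : x ≠ ⊥ := fun hb => by simp [hb] at hx
  set r := x.toReal with hr
  have hxr : x = (r : EReal) := (EReal.coe_toReal hxt hxb).symm
  rw [hxr] at hx ⊢
  have hlt : ℓ + δ * s < r := by exact_mod_cast hx
  obtain ⟨l, hl, hlx⟩ := lamN_exists_lt (N := N) (s := (s : ℤ))
    (x := ((ℓ + (r - (ℓ + δ * s)) : ℝ) : EReal))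
    (by rw [hℓ]; exact_mod_cast by linarith)
  have hl' : l < ℓ + (r - (ℓ + δ * s)) := by exact_mod_cast hlx
  calc sigN N δ ≤ ((l + δ * ((s:ℤ):ℝ) : ℝ) : EReal) := by
        have := sigN_le_mem (δ := δ) hl
        simpa using this
    _ ≤ ((r : ℝ) : EReal) := by
        push_cast
        exact_mod_cast (by nlinarith [mul_nonneg hδ (Nat.cast_nonneg (α := ℝ) s)] : l + δ * (s:ℝ) ≤ r)

lemma le_sigN (hN : PosConvex N) (hδ : 0 < δ) {c : ℝ}
    (h : ∀ s : ℕ, (c : EReal) ≤ lamN N s + ((δ * s : ℝ) : EReal)) : (c : EReal) ≤ sigN N δ := by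
  apply le_sInf
  rintro v ⟨p, hp, rfl⟩
  obtain ⟨C, hC, hNC⟩ := hN
  rw [hNC] at hp
  obtain ⟨cc, hcc, d, hd1, hd2, rfl⟩ := hp
  have hhalf : convexHull ℝ C ⊆ {q : ℝ × ℝ | c ≤ q.1 + δ * q.2} := by
    apply convexHull_min _ (convex_halfSpace_ge (⟨fun a b => by simp; ring, fun a b => by simp; ring⟩ : IsLinearMap ℝ (fun q : ℝ × ℝ => q.1 + δ * q.2)) c)
    intro q hq
    obtain ⟨hq1, m, hm⟩ := hC q hq
    have hqN : q ∈ N := by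
      rw [hNC]; exact ⟨q, subset_convexHull ℝ C hq, 0, le_refl _, le_refl _, by simp⟩
    have hlam : lamN N m ≤ (q.1 : EReal) := by
      apply lamN_le
      have : ((m : ℤ) : ℝ) = q.2 := by rw [hm]; push_cast; ring
      rw [this]
      exact hqN
    have := le_trans (h m) (add_le_add hlam le_rfl)
    have hcle : (c : EReal) ≤ ((q.1 + δ * m : ℝ) : EReal) := by
      rw [EReal.coe_add]
      exact this
    have : c ≤ q.1 + δ * m := by exact_mod_cast hcle
    simpa [Set.mem_setOf_eq, hm] using this
  have hc : c ≤ cc.1 + δ * cc.2 := hhalf hcc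
  have : cc.1 + δ * cc.2 ≤ (cc + d).1 + δ * (cc + d).2 := by
    simp only [Prod.fst_add, Prod.snd_add]
    nlinarith [mul_nonneg hδ.le hd2]
  exact_mod_cast le_trans hc (by exact_mod_cast this)

end sig

section minattain
variable {N : Set (ℝ × ℝ)} {δ : ℝ}

lemma exists_finite_row (hN : PosConvex N) (hne : N.Nonempty) : ∃ s : ℕ, lamN N s ≠ ⊤ := by
  obtain ⟨p, hp⟩ := hne
  obtain ⟨C, hC, hNC⟩ := hN
  have hp' := hp
  rw [hNC] at hp'
  obtain ⟨c, hc, d, hd1, hd2, rfl⟩ := hp'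
  have hCne : C.Nonempty := by
    rw [← convexHull_nonempty_iff (𝕜 := ℝ)]; exact ⟨c, hc⟩
  obtain ⟨q, hq⟩ := hCne
  obtain ⟨hq1, m, hm⟩ := hC q hq
  have hqN : q ∈ N := by
    rw [hNC]; exact ⟨q, subset_convexHull ℝ C hq, 0, le_refl _, le_refl _, by simp⟩
  refine ⟨m, ?_⟩
  have : lamN N m ≤ (q.1 : EReal) := by
    apply lamN_le
    have : ((m : ℤ) : ℝ) = q.2 := by rw [hm]; push_cast; ring
    rw [this]; exact hqN
  exact ne_top_of_le_ne_top (EReal.coe_ne_top _) this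

lemma lam_add_nonneg (hN : PosConvex N) (hδ : 0 ≤ δ) (t : ℕ) :
    ((δ * t : ℝ) : EReal) ≤ lamN N t + ((δ * t : ℝ) : EReal) := by
  nth_rewrite 1 [show ((δ * t : ℝ) : EReal) = 0 + ((δ * t : ℝ) : EReal) by rw [zero_add]]
  exact add_le_add (lamN_nonneg hN _) le_rfl

lemma sig_min (hN : PosConvex N) (hne : N.Nonempty) (hδ : 0 < δ) :
    ∃ s : ℕ, lamN N s ≠ ⊤ ∧ sigN N δ = lamN N s + ((δ * s : ℝ) : EReal) ∧
      ∀ t : ℕ, lamN N s + ((δ * s : ℝ) : EReal) ≤ lamN N t + ((δ * t : ℝ) : EReal) := by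
  set f : ℕ → EReal := fun t => lamN N t + ((δ * t : ℝ) : EReal) with hf
  obtain ⟨s₀, hs₀⟩ := exists_finite_row hN hne
  set B : ℝ := (lamN N s₀).toReal + δ * s₀ with hB
  have hfs₀ : f s₀ = (B : EReal) := by
    show lamN N s₀ + ((δ * s₀ : ℝ) : EReal) = (B : EReal)
    rw [lamN_coe hN hs₀, ← EReal.coe_add]
  set S : ℕ := ⌈B / δ⌉₊ + s₀ with hS
  have hltB : ∀ t : ℕ, S + 1 ≤ t → f s₀ ≤ f t := by
    intro t ht
    have h1 : B / δ ≤ (t : ℝ) := by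
      calc B / δ ≤ (⌈B / δ⌉₊ : ℝ) := Nat.le_ceil _
        _ ≤ (t : ℝ) := by exact_mod_cast le_trans (by omega) ht
    have h2 : B ≤ δ * t := by
      rw [div_le_iff₀ hδ] at h1; linarith
    calc f s₀ = (B : EReal) := hfs₀
      _ ≤ ((δ * t : ℝ) : EReal) := by exact_mod_cast h2
      _ ≤ f t := lam_add_nonneg hN hδ.le t
  obtain ⟨s, hsmem, hsmin⟩ := Finset.exists_min_image (Finset.range (S + 1 + 1)) f
    ⟨0, Finset.mem_range.mpr (by omega)⟩
  have hfsle : ∀ t : ℕ, f s ≤ f t := by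
    intro t
    by_cases ht : t < S + 1 + 1
    · exact hsmin t (Finset.mem_range.mpr ht)
    · push_neg at ht
      calc f s ≤ f s₀ := hsmin s₀ (Finset.mem_range.mpr (by omega))
        _ ≤ f t := hltB t (by omega)
  have hfs_le_s₀ : f s ≤ f s₀ := hfsle s₀
  have hfs_ne_top : f s ≠ ⊤ := by
    intro h
    rw [h, hfs₀] at hfs_le_s₀
    exact (EReal.coe_ne_top B) (top_le_iff.mp hfs_le_s₀)
  have hlam_ne_top : lamN N s ≠ ⊤ := by
    intro h
    apply hfs_ne_top
    rw [hf]; simp only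
    rw [h, EReal.top_add_of_ne_bot (EReal.coe_ne_bot _)]
  have hfs_ne_bot : f s ≠ ⊥ := by
    intro h
    have := le_trans (lam_add_nonneg hN hδ.le s) (le_of_eq h)
    rw [le_bot_iff] at this
    exact EReal.coe_ne_bot _ this
  refine ⟨s, hlam_ne_top, ?_, hfsle⟩
  apply le_antisymm
  · exact sigN_le_lam hN hδ.le s
  · set r := (f s).toReal with hr
    have hfr : f s = (r : EReal) := (EReal.coe_toReal hfs_ne_top hfs_ne_bot).symm
    show f s ≤ sigN N δ
    rw [hfr]
    apply le_sigN hN hδ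
    intro t
    rw [← hfr]
    exact hfsle t

lemma chi_spec (hN : PosConvex N) (hne : N.Nonempty) (hδ : 0 < δ) :
    lamN N (chiN N δ) + ((δ * (chiN N δ) : ℝ) : EReal) = sigN N δ ∧ lamN N (chiN N δ) ≠ ⊤ ∧
      ∀ t : ℕ, lamN N t + ((δ * t : ℝ) : EReal) = sigN N δ → t ≤ chiN N δ := by
  obtain ⟨s, hstop, hseq, hsmin⟩ := sig_min hN hne hδ
  set M := {t : ℕ | lamN N (t : ℤ) + ((δ * t : ℝ) : EReal) = sigN N δ} with hM
  have hMne : M.Nonempty := ⟨s, hseq.symm⟩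
  have hsig_ne_top : sigN N δ ≠ ⊤ := by
    rw [hseq]
    intro h
    rw [lamN_coe hN hstop, ← EReal.coe_add] at h
    exact EReal.coe_ne_top _ h
  have hsig_ne_bot : sigN N δ ≠ ⊥ := by
    rw [hseq]
    intro h
    have := le_trans (lam_add_nonneg hN hδ.le s) (le_of_eq h)
    rw [le_bot_iff] at this
    exact EReal.coe_ne_bot _ this
  set r := (sigN N δ).toReal with hr
  have hrr : sigN N δ = (r : EReal) := (EReal.coe_toReal hsig_ne_top hsig_ne_bot).symm
  have hbdd : ∀ t ∈ M, t ≤ ⌈r / δ⌉₊ := by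
    intro t ht
    have h1 : ((δ * t : ℝ) : EReal) ≤ (r : EReal) := by
      rw [← hrr, ← ht]; exact lam_add_nonneg hN hδ.le t
    have h2 : δ * t ≤ r := by exact_mod_cast h1
    have h3 : (t : ℝ) ≤ r / δ := by rw [le_div_iff₀ hδ]; linarith
    calc t = ⌈(t : ℝ)⌉₊ := by simp
      _ ≤ ⌈r / δ⌉₊ := Nat.ceil_mono h3
  have hbdd' : BddAbove M := ⟨⌈r / δ⌉₊, hbdd⟩
  have hchi_mem : chiN N δ ∈ M := Nat.sSup_mem hMne hbdd'
  exact ⟨hchi_mem, by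
    intro h
    rw [hM, Set.mem_setOf_eq, h, EReal.top_add_of_ne_bot (EReal.coe_ne_bot _)] at hchi_mem
    exact hsig_ne_top hchi_mem.symm,
    fun t ht => le_csSup hbdd' ht⟩

end minattain

section convexseq
variable {N : Set (ℝ × ℝ)}

/-- real value of `lamN` at a natural height -/
def lamR (N : Set (ℝ × ℝ)) (s : ℕ) : ℝ := (lamN N (s : ℤ)).toReal

lemma lam_fin_mono (hN : PosConvex N) {b t : ℕ} (hb : lamN N b ≠ ⊤) (h : b ≤ t) :
    lamN N t ≠ ⊤ :=
  fun ht => hb (top_le_iff.mp (ht ▸ lamN_mono' hN (by exact_mod_cast h)))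

lemma lamR_coe (hN : PosConvex N) {s : ℕ} (h : lamN N s ≠ ⊤) :
    lamN N (s : ℤ) = ((lamR N s : ℝ) : EReal) := lamN_coe hN h

lemma lamR_mono (hN : PosConvex N) {b s t : ℕ} (hb : lamN N b ≠ ⊤) (hbs : b ≤ s) (h : s ≤ t) :
    lamR N t ≤ lamR N s :=
  EReal.toReal_le_toReal (lamN_mono' hN (by exact_mod_cast h)) (lamN_ne_bot hN _)
    (lam_fin_mono hN hb hbs)

lemma lamR_convex3 (hN : PosConvex N) {s : ℕ} (h : lamN N s ≠ ⊤) :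
    lamR N (s + 1) + lamR N (s + 1) ≤ lamR N s + lamR N (s + 2) := by
  have h1 : lamN N (s + 1 : ℕ) ≠ ⊤ := lam_fin_mono hN h (by omega)
  have h2 : lamN N (s + 2 : ℕ) ≠ ⊤ := lam_fin_mono hN h (by omega)
  have := lamN_convex3 hN (s : ℤ)
  rw [show ((s : ℤ) + 1) = ((s + 1 : ℕ) : ℤ) by push_cast; ring,
    show ((s : ℤ) + 2) = ((s + 2 : ℕ) : ℤ) by push_cast; ring] at this
  rw [lamR_coe hN h, lamR_coe hN h1, lamR_coe hN h2, ← EReal.coe_add, ← EReal.coe_add] at this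
  exact_mod_cast this

/-- slopes are nonincreasing above a finite row -/
lemma diff_le (hN : PosConvex N) {b : ℕ} (hb : lamN N b ≠ ⊤) :
    ∀ k : ℕ, lamR N (b + k) - lamR N (b + k + 1) ≤ lamR N b - lamR N (b + 1) := by
  intro k
  induction k with
  | zero => simp
  | succ n ih =>
    have hc := lamR_convex3 hN (lam_fin_mono hN hb (by omega : b ≤ b + n))
    have e1 : b + n + 1 = b + (n + 1) := by ring
    have e2 : b + n + 2 = b + (n + 1) + 1 := by ring
    rw [e1] at hc ih
    rw [e2] at hc
    linarith

/-- telescoped upper slope bound -/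
lemma sum_ge (hN : PosConvex N) {b : ℕ} (hb : lamN N b ≠ ⊤) :
    ∀ k : ℕ, lamR N b ≤ lamR N (b + k) + k * (lamR N b - lamR N (b + 1)) := by
  intro k
  induction k with
  | zero => simp
  | succ n ih =>
    have hd := diff_le hN hb n
    have : lamR N (b + n) ≤ lamR N (b + (n + 1)) + (lamR N b - lamR N (b + 1)) := by
      have e1 : b + n + 1 = b + (n + 1) := by ring
      rw [e1] at hd
      linarith
    push_cast
    push_cast at ih
    linarith

/-- if two consecutive rows agree, `lamR` is constant afterwards -/
lemma const_of (hN : PosConvex N) {b : ℕ} (hb : lamN N b ≠ ⊤)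
    (heq : lamR N b = lamR N (b + 1)) : ∀ k : ℕ, lamR N (b + k) = lamR N b := by
  intro k
  induction k with
  | zero => simp
  | succ n ih =>
    have hd := diff_le hN hb n
    have hm := lamR_mono hN hb (by omega : b ≤ b + n) (by omega : b + n ≤ b + n + 1)
    have e1 : b + n + 1 = b + (n + 1) := by ring
    rw [e1] at hd hm
    linarith

/-- lower slope bound below `s` (with possible infinite rows handled by finiteness hypothesis) -/
lemma low_bound (hN : PosConvex N) {s : ℕ} (hs : lamN N s ≠ ⊤) :
    ∀ k t : ℕ, t + k = s → lamN N t ≠ ⊤ →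
      (lamR N s - lamR N (s + 1) ≤ lamR N t - lamR N (t + 1)) ∧
      lamR N s + k * (lamR N s - lamR N (s + 1)) ≤ lamR N t := by
  intro k
  induction k with
  | zero =>
    intro t ht _
    subst ht
    simp
  | succ n ih =>
    intro t ht htfin
    have ht1 : t + 1 + n = s := by omega
    have ht1fin : lamN N (t + 1 : ℕ) ≠ ⊤ := lam_fin_mono hN htfin (by omega)
    obtain ⟨ihd, ihs⟩ := ih (t + 1) ht1 ht1fin
    have hc := lamR_convex3 hN htfin
    constructor
    · linarith
    · push_cast
      linarith
end convexseq

section minimizers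
variable {N : Set (ℝ × ℝ)}

lemma min_above (hN : PosConvex N) {s : ℕ} (hfin : lamN N s ≠ ⊤) {δ : ℝ}
    (hd : lamR N s - lamR N (s + 1) ≤ δ) :
    ∀ t : ℕ, s ≤ t → ((lamR N s + δ * s : ℝ) : EReal) ≤ lamN N t + ((δ * t : ℝ) : EReal) := by
  intro t hst
  obtain ⟨k, rfl⟩ := Nat.exists_eq_add_of_le hst
  rw [lamR_coe hN (lam_fin_mono hN hfin hst), ← EReal.coe_add, EReal.coe_le_coe_iff]
  have hsum := sum_ge hN hfin k
  have hk : (k : ℝ) * (lamR N s - lamR N (s + 1)) ≤ (k : ℝ) * δ :=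
    mul_le_mul_of_nonneg_left hd (Nat.cast_nonneg k)
  push_cast
  nlinarith

lemma min_below_diff (hN : PosConvex N) {s : ℕ} (hfin : lamN N s ≠ ⊤) {δ : ℝ} (hδ : 0 ≤ δ)
    (hd : δ ≤ lamR N s - lamR N (s + 1)) :
    ∀ t : ℕ, t ≤ s → ((lamR N s + δ * s : ℝ) : EReal) ≤ lamN N t + ((δ * t : ℝ) : EReal) := by
  intro t hts
  rcases eq_or_ne (lamN N t) ⊤ with h | h
  · rw [h, EReal.top_add_of_ne_bot (EReal.coe_ne_bot _)]; exact le_top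
  obtain ⟨hdiff, hlow⟩ := low_bound hN hfin (s - t) t (by omega) h
  rw [lamR_coe hN h, ← EReal.coe_add, EReal.coe_le_coe_iff]
  have hk : ((s - t : ℕ) : ℝ) * δ ≤ ((s - t : ℕ) : ℝ) * (lamR N s - lamR N (s + 1)) :=
    mul_le_mul_of_nonneg_left hd (Nat.cast_nonneg _)
  have hst : ((s - t : ℕ) : ℝ) = (s : ℝ) - (t : ℝ) := by
    push_cast [Nat.cast_sub hts]; ring
  rw [hst] at hk hlow
  nlinarith

lemma min_below_sig (hN : PosConvex N) (hne : N.Nonempty) {δ₀ : ℝ} (hδ₀ : 0 < δ₀) {δ : ℝ}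
    (hδ : 0 < δ) (hle : δ ≤ δ₀) :
    ∀ t : ℕ, t ≤ chiN N δ₀ →
      ((lamR N (chiN N δ₀) + δ * (chiN N δ₀) : ℝ) : EReal) ≤ lamN N t + ((δ * t : ℝ) : EReal) := by
  intro t htχ
  set χ := chiN N δ₀ with hχ
  obtain ⟨hχeq, hχfin, _⟩ := chi_spec hN hne hδ₀
  rcases eq_or_ne (lamN N t) ⊤ with h | h
  · rw [h, EReal.top_add_of_ne_bot (EReal.coe_ne_bot _)]; exact le_top
  have hsigle : sigN N δ₀ ≤ lamN N t + ((δ₀ * t : ℝ) : EReal) := sigN_le_lam hN hδ₀.le t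
  rw [← hχeq, lamR_coe hN hχfin, lamR_coe hN h, ← EReal.coe_add, ← EReal.coe_add,
    EReal.coe_le_coe_iff] at hsigle
  rw [lamR_coe hN h, ← EReal.coe_add, EReal.coe_le_coe_iff]
  have htr : (t : ℝ) ≤ (χ : ℝ) := by exact_mod_cast htχ
  have hprod : 0 ≤ (δ₀ - δ) * ((χ : ℝ) - (t : ℝ)) :=
    mul_nonneg (by linarith) (by linarith)
  nlinarith

lemma sig_eq_at (hN : PosConvex N) {δ : ℝ} (hδ : 0 < δ) {s : ℕ} (hfin : lamN N s ≠ ⊤)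
    (hmin : ∀ t : ℕ, ((lamR N s + δ * s : ℝ) : EReal) ≤ lamN N t + ((δ * t : ℝ) : EReal)) :
    sigN N δ = ((lamR N s + δ * s : ℝ) : EReal) := by
  apply le_antisymm
  · have := sigN_le_lam hN hδ.le s
    rwa [lamR_coe hN hfin, ← EReal.coe_add] at this
  · exact le_sigN hN hδ hmin

lemma dchi_lt (hN : PosConvex N) (hne : N.Nonempty) {δ₀ : ℝ} (hδ₀ : 0 < δ₀) :
    lamR N (chiN N δ₀) - lamR N (chiN N δ₀ + 1) < δ₀ := by
  set χ := chiN N δ₀ with hχ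
  obtain ⟨hχeq, hχfin, hχmax⟩ := chi_spec hN hne hδ₀
  have hfin1 : lamN N (χ + 1 : ℕ) ≠ ⊤ := lam_fin_mono hN hχfin (by omega)
  have hne' : lamN N (χ + 1 : ℕ) + ((δ₀ * (χ + 1 : ℕ) : ℝ) : EReal) ≠ sigN N δ₀ := by
    intro h
    have := hχmax (χ + 1) h
    omega
  have hle : sigN N δ₀ ≤ lamN N (χ + 1 : ℕ) + ((δ₀ * (χ + 1 : ℕ) : ℝ) : EReal) :=
    sigN_le_lam hN hδ₀.le (χ + 1)
  have hlt := lt_of_le_of_ne hle (Ne.symm hne')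
  rw [← hχeq, lamR_coe hN hχfin, lamR_coe hN hfin1, ← EReal.coe_add, ← EReal.coe_add,
    EReal.coe_lt_coe_iff] at hlt
  push_cast at hlt
  linarith

lemma sig_at_chi (hN : PosConvex N) (hne : N.Nonempty) {δ₀ : ℝ} (hδ₀ : 0 < δ₀) {δ : ℝ}
    (hδ : 0 < δ) (hle : δ ≤ δ₀) (hgt : lamR N (chiN N δ₀) - lamR N (chiN N δ₀ + 1) ≤ δ) :
    sigN N δ = ((lamR N (chiN N δ₀) + δ * (chiN N δ₀) : ℝ) : EReal) := by
  obtain ⟨_, hχfin, _⟩ := chi_spec hN hne hδ₀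
  apply sig_eq_at hN hδ hχfin
  intro t
  rcases le_total t (chiN N δ₀) with h | h
  · exact min_below_sig hN hne hδ₀ hδ hle t h
  · exact min_above hN hχfin hgt t h

lemma sig_at_slope (hN : PosConvex N) {s : ℕ} (hfin : lamN N s ≠ ⊤)
    (hd : 0 < lamR N s - lamR N (s + 1)) :
    sigN N (lamR N s - lamR N (s + 1)) =
      ((lamR N s + (lamR N s - lamR N (s + 1)) * s : ℝ) : EReal) := by
  apply sig_eq_at hN hd hfin
  intro t
  rcases le_total t s with h | h
  · exact min_below_diff hN hfin hd.le (le_refl _) t h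
  · exact min_above hN hfin (le_refl _) t h

lemma sig_ge_const (hN : PosConvex N) {s : ℕ} (hfin : lamN N s ≠ ⊤)
    (hconst : lamR N s = lamR N (s + 1)) {δ : ℝ} (hδ : 0 < δ) :
    ((lamR N s : ℝ) : EReal) ≤ sigN N δ := by
  apply le_sigN hN hδ
  intro t
  have hnn : (0 : EReal) ≤ ((δ * t : ℝ) : EReal) := by
    exact_mod_cast mul_nonneg hδ.le (Nat.cast_nonneg t)
  rcases le_total t s with h | h
  · have h1 : ((lamR N s : ℝ) : EReal) ≤ lamN N t := by
      rcases eq_or_ne (lamN N t) ⊤ with ht | ht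
      · rw [ht]; exact le_top
      rw [lamR_coe hN ht, EReal.coe_le_coe_iff]
      exact lamR_mono hN ht (le_refl _) h
    calc ((lamR N s : ℝ) : EReal) = ((lamR N s : ℝ) : EReal) + 0 := by rw [add_zero]
      _ ≤ lamN N t + ((δ * t : ℝ) : EReal) := add_le_add h1 hnn
  · obtain ⟨k, rfl⟩ := Nat.exists_eq_add_of_le h
    have h1 : ((lamR N s : ℝ) : EReal) ≤ lamN N (s + k : ℕ) := by
      rw [lamR_coe hN (lam_fin_mono hN hfin h), EReal.coe_le_coe_iff,
        const_of hN hfin hconst k]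
    calc ((lamR N s : ℝ) : EReal) = ((lamR N s : ℝ) : EReal) + 0 := by rw [add_zero]
      _ ≤ lamN N (s + k : ℕ) + ((δ * (s + k : ℕ) : ℝ) : EReal) := add_le_add h1 hnn

end minimizers

section main
lemma sig_le_sig {N N' : Set (ℝ × ℝ)} (hN : PosConvex N) (hN' : PosConvex N')
    (hne : N.Nonempty) {δ₀ : ℝ} (hδ₀ : 0 < δ₀) {δ : ℝ} (hδ : 0 < δ) (hle : δ ≤ δ₀)
    (hagree : ∀ s : ℕ, chiN N δ₀ ≤ s → lamN N s = lamN N' s) :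
    sigN N' δ ≤ sigN N δ := by
  set χ := chiN N δ₀ with hχdef
  set t := chiN N δ with htdef
  obtain ⟨hχeq, hχfin, hχmax⟩ := chi_spec hN hne hδ₀
  obtain ⟨hteq, htfin, htmax⟩ := chi_spec hN hne hδ
  have htχ : χ ≤ t := by
    rcases eq_or_lt_of_le hle with rfl | hlt
    · exact le_of_eq rfl
    · have h1 : lamN N t + ((δ * t : ℝ) : EReal) ≤ lamN N χ + ((δ * χ : ℝ) : EReal) :=
        hteq ▸ sigN_le_lam hN hδ.le χ
      have h2 : lamN N χ + ((δ₀ * χ : ℝ) : EReal) ≤ lamN N t + ((δ₀ * t : ℝ) : EReal) :=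
        hχeq ▸ sigN_le_lam hN hδ₀.le t
      rw [lamR_coe hN htfin, lamR_coe hN hχfin, ← EReal.coe_add, ← EReal.coe_add,
        EReal.coe_le_coe_iff] at h1 h2
      by_contra hcon
      push_neg at hcon
      have hcon' : (t : ℝ) < (χ : ℝ) := by exact_mod_cast hcon
      nlinarith
  calc sigN N' δ ≤ lamN N' t + ((δ * t : ℝ) : EReal) := sigN_le_lam hN' hδ.le t
    _ = lamN N t + ((δ * t : ℝ) : EReal) := by rw [hagree t htχ]
    _ = sigN N δ := hteq

lemma lam_le_lam {N N' : Set (ℝ × ℝ)} (hN : PosConvex N) (hN' : PosConvex N')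
    (hne : N.Nonempty) (hne' : N'.Nonempty) {δ₀ : ℝ} (hδ₀ : 0 < δ₀)
    (hsig : ∀ δ : ℝ, 0 < δ → δ ≤ δ₀ → sigN N δ = sigN N' δ)
    {s : ℕ} (hs : chiN N δ₀ ≤ s) : lamN N s ≤ lamN N' s := by
  set χ := chiN N δ₀ with hχdef
  obtain ⟨hχeq, hχfin, hχmax⟩ := chi_spec hN hne hδ₀
  have hfin : lamN N s ≠ ⊤ := lam_fin_mono hN hχfin hs
  have hfin1 : lamN N (s + 1 : ℕ) ≠ ⊤ := lam_fin_mono hN hχfin (by omega)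
  set d := lamR N s - lamR N (s + 1) with hd_def
  have hdnn : 0 ≤ d := sub_nonneg.mpr (lamR_mono hN hχfin hs (by omega))
  rcases lt_or_eq_of_le hdnn with hdpos | hdzero
  · -- positive slope case
    have hdle : d ≤ δ₀ := by
      obtain ⟨k, rfl⟩ := Nat.exists_eq_add_of_le hs
      have h1 := diff_le hN hχfin k
      have h2 := dchi_lt hN hne hδ₀
      rw [hd_def]
      calc lamR N (χ + k) - lamR N (χ + k + 1) ≤ lamR N χ - lamR N (χ + 1) := h1
        _ ≤ δ₀ := h2.le
    have h1 : sigN N d = ((lamR N s + d * s : ℝ) : EReal) := sig_at_slope hN hfin hdpos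
    have h2 : sigN N' d ≤ lamN N' s + ((d * s : ℝ) : EReal) := sigN_le_lam hN' hdpos.le s
    rw [← hsig d hdpos hdle, h1, EReal.coe_add] at h2
    have h3 : ((lamR N s : ℝ) : EReal) ≤ lamN N' s :=
      (EReal.addLECancellable_coe (d * s)).add_le_add_iff_right.mp h2
    rwa [← lamR_coe hN hfin] at h3
  · -- flat case : lamR constant from s on
    have hconst : lamR N s = lamR N (s + 1) := by linarith [hdzero]
    rcases eq_or_ne (lamN N' s) ⊤ with h | h
    · rw [h]; exact le_top
    rw [lamR_coe hN hfin, lamR_coe hN' h, EReal.coe_le_coe_iff]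
    apply le_of_forall_pos_le_add
    intro ε hε
    set δ := min δ₀ (ε / (s + 1)) with hδdef
    have hδpos : 0 < δ := lt_min hδ₀ (by positivity)
    have hδle : δ ≤ δ₀ := min_le_left _ _
    have hstep : ((lamR N s : ℝ) : EReal) ≤ sigN N' δ := by
      rw [← hsig δ hδpos hδle]
      exact sig_ge_const hN hfin hconst hδpos
    have h2 : sigN N' δ ≤ lamN N' s + ((δ * s : ℝ) : EReal) := sigN_le_lam hN' hδpos.le s
    have h3 : ((lamR N s : ℝ) : EReal) ≤ ((lamR N' s + δ * s : ℝ) : EReal) := by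
      rw [EReal.coe_add]
      exact le_trans hstep (by rwa [lamR_coe hN' h] at h2)
    have h4 : lamR N s ≤ lamR N' s + δ * s := by exact_mod_cast h3
    have h5 : δ * s ≤ ε := by
      have : δ ≤ ε / (s + 1) := min_le_right _ _
      have hs1 : (0:ℝ) < s + 1 := by positivity
      calc δ * s ≤ (ε / (s + 1)) * s := mul_le_mul_of_nonneg_right this (Nat.cast_nonneg s)
        _ ≤ ε := by rw [div_mul_eq_mul_div, div_le_iff₀ hs1]; nlinarith [hε.le, Nat.cast_nonneg (α := ℝ) s]
    linarith

end main

/-- for nonempty positively convex polygons `N, N'` and `δ₀ > 0`: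
`ς_δ(N) = ς_δ(N')` for all `0 < δ ≤ δ₀` iff `χ_{δ₀}(N) = χ_{δ₀}(N')` and
`λ_N(s) = λ_{N'}(s)` for all `s ≥ χ_{δ₀}(N)`. -/
theorem statement12 (N N' : Set (ℝ × ℝ)) (hN : PosConvex N) (hN' : PosConvex N')
    (hne : N.Nonempty) (hne' : N'.Nonempty) (δ₀ : ℝ) (hδ₀ : 0 < δ₀) :
    (∀ δ : ℝ, 0 < δ → δ ≤ δ₀ → sigN N δ = sigN N' δ) ↔
      (chiN N δ₀ = chiN N' δ₀ ∧
        ∀ s : ℕ, chiN N δ₀ ≤ s → lamN N (s : ℤ) = lamN N' (s : ℤ)) := by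
  constructor
  · intro hsig
    set χ := chiN N δ₀ with hχdef
    set χ' := chiN N' δ₀ with hχ'def
    have hd := dchi_lt hN hne hδ₀
    have hd' := dchi_lt hN' hne' hδ₀
    set m := max (max (lamR N χ - lamR N (χ + 1)) (lamR N' χ' - lamR N' (χ' + 1))) 0 with hm
    have hm0 : 0 ≤ m := le_max_right _ _
    have hmlt : m < δ₀ := max_lt (max_lt hd hd') hδ₀
    set δ := (m + δ₀) / 2 with hδdef
    have hδpos : 0 < δ := by rw [hδdef]; linarith
    have hδlt : δ < δ₀ := by rw [hδdef]; linarith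
    have hdδ : lamR N χ - lamR N (χ + 1) ≤ δ := by
      have : lamR N χ - lamR N (χ + 1) ≤ m := le_trans (le_max_left _ _) (le_max_left _ _)
      rw [hδdef]; linarith
    have hdδ' : lamR N' χ' - lamR N' (χ' + 1) ≤ δ := by
      have : lamR N' χ' - lamR N' (χ' + 1) ≤ m := le_trans (le_max_right _ _) (le_max_left _ _)
      rw [hδdef]; linarith
    have e1 := sig_at_chi hN hne hδ₀ hδpos hδlt.le hdδ
    have e1' := sig_at_chi hN' hne' hδ₀ hδpos hδlt.le hdδ'
    have e0 := sig_at_chi hN hne hδ₀ hδ₀ le_rfl hd.le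
    have e0' := sig_at_chi hN' hne' hδ₀ hδ₀ le_rfl hd'.le
    have q1 : lamR N χ + δ * χ = lamR N' χ' + δ * χ' := by
      have := hsig δ hδpos hδlt.le
      rw [e1, e1'] at this
      exact_mod_cast this
    have q0 : lamR N χ + δ₀ * χ = lamR N' χ' + δ₀ * χ' := by
      have := hsig δ₀ hδ₀ le_rfl
      rw [e0, e0'] at this
      exact_mod_cast this
    have hχχ' : χ = χ' := by
      have hmul : (δ₀ - δ) * (χ : ℝ) = (δ₀ - δ) * (χ' : ℝ) := by linarith
      have hne0 : δ₀ - δ ≠ 0 := by linarith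
      have : (χ : ℝ) = (χ' : ℝ) := mul_left_cancel₀ hne0 hmul
      exact_mod_cast this
    refine ⟨hχχ', ?_⟩
    intro s hs
    refine le_antisymm (lam_le_lam hN hN' hne hne' hδ₀ hsig hs) ?_
    exact lam_le_lam hN' hN hne' hne hδ₀ (fun δ' h1 h2 => (hsig δ' h1 h2).symm)
      (by rw [← hχ'def, ← hχχ']; exact hs)
  · rintro ⟨hchi, hagree⟩ δ hδ hle
    apply le_antisymm
    · exact sig_le_sig hN' hN hne' hδ₀ hδ hle
        (fun s hs => (hagree s (by rw [hchi]; exact hs)).symm)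
    · exact sig_le_sig hN hN' hne hδ₀ hδ hle hagree
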